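/- Let f : ℝ → ℝ be differentiable and strictly convex, and let x_1 ≤ x_2 ≤ … ≤ x_n be real numbers. Define the Bregman cluster cost CC_f(i,j) = ∑_{ℓ=i}^{j} D_f(x_ℓ, μ_{i,j}) for i ≤ j, where D_f(x,y) = f(x) − f(y) − f'(y)(x−y) and μ_{i,j} is the arithmetic mean of x_i, …, x_j, with the convention CC_f(i,j) = 0 when i > j. Then for all indices u < v and a < b, the concave (Monge) inequality holds: CC_f(v, b) + CC_f(u, a) ≤ CC_f(u, b) + CC_f(v, a). -/

import Mathlib

/-- The Bregman divergence induced by `f`: `D_f(x, y) = f x − f y − f'(y)(x − y)`. -/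
noncomputable def bregman (f : ℝ → ℝ) (x y : ℝ) : ℝ :=
  f x - f y - deriv f y * (x - y)

/-- The Bregman cluster cost of grouping `x_i, …, x_j` into one cluster with the
optimal centroid (the arithmetic mean); `0` when `i > j`. -/
noncomputable def bregmanClusterCost (f : ℝ → ℝ) (x : ℕ → ℝ) (i j : ℕ) : ℝ :=
  ∑ ℓ ∈ Finset.Icc i j,
    bregman f (x ℓ) ((∑ t ∈ Finset.Icc i j, x t) / ((Finset.Icc i j).card : ℝ))


open Finset

section Aux

variable {f : ℝ → ℝ} {x : ℕ → ℝ}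

/-- Generic weighted Jensen inequality over a finset of naturals. -/
lemma my_jensen (hconv : ConvexOn ℝ Set.univ f) (t : Finset ℕ) (w p : ℕ → ℝ)
    (h0 : ∀ i ∈ t, 0 ≤ w i) (hW : 0 < ∑ i ∈ t, w i) :
    (∑ i ∈ t, w i) * f ((∑ i ∈ t, w i * p i) / (∑ i ∈ t, w i)) ≤ ∑ i ∈ t, w i * f (p i) := by
  have h := hconv.map_centerMass_le h0 hW (fun i _ => Set.mem_univ (p i))
  rw [Finset.centerMass, Finset.centerMass] at h
  simp only [smul_eq_mul, Function.comp] at h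
  rw [inv_mul_eq_div] at h
  have h2 := mul_le_mul_of_nonneg_left h (le_of_lt hW)
  calc (∑ i ∈ t, w i) * f ((∑ i ∈ t, w i * p i) / (∑ i ∈ t, w i)) ≤
      (∑ i ∈ t, w i) * ((∑ i ∈ t, w i)⁻¹ * ∑ i ∈ t, w i * f (p i)) := h2
    _ = ∑ i ∈ t, w i * f (p i) := by field_simp

lemma bcc_of_le (f : ℝ → ℝ) (x : ℕ → ℝ) {i j : ℕ} (hij : i ≤ j) :
    bregmanClusterCost f x i j
      = (∑ ℓ ∈ Icc i j, f (x ℓ))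
        - ((Icc i j).card : ℝ)
            * f ((∑ t ∈ Icc i j, x t) / ((Icc i j).card : ℝ)) := by
  have h0 : (Icc i j).card ≠ 0 := by simp [Nat.card_Icc]; omega
  have hc : ((Icc i j).card : ℝ) ≠ 0 := Nat.cast_ne_zero.mpr h0
  unfold bregmanClusterCost bregman
  set μ := (∑ t ∈ Icc i j, x t) / ((Icc i j).card : ℝ) with hμ
  have hz : ∑ ℓ ∈ Icc i j, (x ℓ - μ) = 0 := by
    rw [Finset.sum_sub_distrib, Finset.sum_const, nsmul_eq_mul, hμ, mul_comm,
      div_mul_cancel₀ _ hc, sub_self]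
  rw [Finset.sum_sub_distrib, Finset.sum_sub_distrib, ← Finset.mul_sum, hz,
    Finset.sum_const, nsmul_eq_mul]
  ring

lemma bcc_empty (f : ℝ → ℝ) (x : ℕ → ℝ) {i j : ℕ} (h : j < i) :
    bregmanClusterCost f x i j = 0 := by
  simp [bregmanClusterCost, Finset.Icc_eq_empty_of_lt h]

lemma bcc_nonneg (hconv : ConvexOn ℝ Set.univ f) (i j : ℕ) :
    0 ≤ bregmanClusterCost f x i j := by
  rcases le_or_gt i j with hij | hij
  · rw [bcc_of_le f x hij, sub_nonneg]
    have hc : 0 < ((Icc i j).card : ℝ) := by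
      have : (Icc i j).Nonempty := ⟨i, by simp [hij]⟩
      exact_mod_cast Finset.card_pos.2 this
    have := my_jensen hconv (Icc i j) (fun _ => 1) x (fun _ _ => zero_le_one)
      (by simpa using hc)
    simpa using this
  · rw [bcc_empty f x hij]

lemma icc_split {i k j : ℕ} (hik : i ≤ k + 1) (hkj : k ≤ j) (g : ℕ → ℝ) :
    ∑ ℓ ∈ Icc i j, g ℓ = ∑ ℓ ∈ Icc i k, g ℓ + ∑ ℓ ∈ Icc (k+1) j, g ℓ := by
  rw [← Finset.sum_union]
  · congr 1
    ext ℓ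
    simp only [Finset.mem_union, Finset.mem_Icc]
    omega
  · rw [Finset.disjoint_left]
    intro ℓ h1 h2
    simp only [Finset.mem_Icc] at h1 h2
    omega

/-- Two-point Jensen: combining two groups' costs. -/
lemma two_point_jensen (hconv : ConvexOn ℝ Set.univ f) {m1 m2 s1 s2 : ℝ}
    (h1 : 0 < m1) (h2 : 0 < m2) :
    (m1 + m2) * f ((s1 + s2) / (m1 + m2)) ≤ m1 * f (s1 / m1) + m2 * f (s2 / m2) := by
  have hmm : 0 < m1 + m2 := by linarith
  have ha : (0:ℝ) ≤ m1 / (m1 + m2) := div_nonneg h1.le hmm.le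
  have hb : (0:ℝ) ≤ m2 / (m1 + m2) := div_nonneg h2.le hmm.le
  have hab : m1 / (m1 + m2) + m2 / (m1 + m2) = 1 := by field_simp
  have hj := hconv.2 (Set.mem_univ (s1 / m1)) (Set.mem_univ (s2 / m2)) ha hb hab
  simp only [smul_eq_mul] at hj
  have hcomb : m1 / (m1 + m2) * (s1 / m1) + m2 / (m1 + m2) * (s2 / m2)
      = (s1 + s2) / (m1 + m2) := by field_simp
  rw [hcomb] at hj
  have h3 := mul_le_mul_of_nonneg_left hj hmm.le
  calc (m1 + m2) * f ((s1 + s2) / (m1 + m2))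
      ≤ (m1 + m2) * (m1 / (m1 + m2) * f (s1 / m1) + m2 / (m1 + m2) * f (s2 / m2)) := h3
    _ = m1 * f (s1 / m1) + m2 * f (s2 / m2) := by field_simp; try ring

lemma bcc_superadd (hconv : ConvexOn ℝ Set.univ f) {i k j : ℕ}
    (hik : i ≤ k) (hkj : k < j) :
    bregmanClusterCost f x i k + bregmanClusterCost f x (k+1) j
      ≤ bregmanClusterCost f x i j := by
  rw [bcc_of_le f x hik, bcc_of_le f x (by omega : k + 1 ≤ j),
    bcc_of_le f x (by omega : i ≤ j)]
  have h1 : (0:ℝ) < ((Icc i k).card : ℝ) := by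
    have : (Icc i k).Nonempty := ⟨i, by simp [hik]⟩
    exact_mod_cast Finset.card_pos.2 this
  have h2 : (0:ℝ) < ((Icc (k+1) j).card : ℝ) := by
    have : (Icc (k+1) j).Nonempty := ⟨k+1, by simp; omega⟩
    exact_mod_cast Finset.card_pos.2 this
  have hcn : (Icc i j).card = (Icc i k).card + (Icc (k+1) j).card := by
    simp only [Nat.card_Icc]; omega
  have hcard : ((Icc i j).card : ℝ)
      = ((Icc i k).card : ℝ) + ((Icc (k+1) j).card : ℝ) := by exact_mod_cast hcn
  set m1 := ((Icc i k).card : ℝ)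
  set m2 := ((Icc (k+1) j).card : ℝ)
  set s1 := ∑ t ∈ Icc i k, x t
  set s2 := ∑ t ∈ Icc (k+1) j, x t
  have hsum : ∑ t ∈ Icc i j, x t = s1 + s2 := icc_split (by omega) (by omega) x
  have hF : ∑ ℓ ∈ Icc i j, f (x ℓ)
      = (∑ ℓ ∈ Icc i k, f (x ℓ)) + ∑ ℓ ∈ Icc (k+1) j, f (x ℓ) :=
    icc_split (by omega) (by omega) _
  rw [hcard, hsum, hF]
  have := two_point_jensen hconv h1 h2 (s1 := s1) (s2 := s2)
  linarith

lemma bcc_mono_right (hconv : ConvexOn ℝ Set.univ f) {i j j' : ℕ}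
    (hij : i ≤ j) (hjj : j ≤ j') :
    bregmanClusterCost f x i j ≤ bregmanClusterCost f x i j' := by
  rcases eq_or_lt_of_le hjj with rfl | h
  · exact le_rfl
  · have h1 := bcc_superadd (x := x) hconv hij h
    have h2 := bcc_nonneg (x := x) hconv (j+1) j'
    linarith

lemma bcc_mono_left (hconv : ConvexOn ℝ Set.univ f) {i' i j : ℕ}
    (hi : i' ≤ i) (hij : i ≤ j) :
    bregmanClusterCost f x i j ≤ bregmanClusterCost f x i' j := by
  rcases eq_or_lt_of_le hi with rfl | h
  · exact le_rfl
  · have hi1 : i - 1 + 1 = i := by omega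
    have h1 := bcc_superadd (x := x) hconv (i := i') (k := i - 1) (j := j)
      (by omega) (by omega)
    rw [hi1] at h1
    have h2 := bcc_nonneg (x := x) hconv i' (i-1)
    linarith

end Aux


section Means

variable {n : ℕ} {x : ℕ → ℝ}

lemma mean_le_right (hsort : ∀ ⦃p q : ℕ⦄, 1 ≤ p → p ≤ q → q ≤ n → x p ≤ x q)
    {i j : ℕ} (h1 : 1 ≤ i) (hij : i ≤ j) (hjn : j ≤ n) :
    (∑ t ∈ Icc i j, x t) / ((Icc i j).card : ℝ) ≤ x j := by
  have hc : (0:ℝ) < ((Icc i j).card : ℝ) := by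
    have : (Icc i j).Nonempty := ⟨i, by simp [hij]⟩
    exact_mod_cast Finset.card_pos.2 this
  have hb : ∀ ℓ ∈ Icc i j, x ℓ ≤ x j := by
    intro ℓ hℓ
    rw [Finset.mem_Icc] at hℓ
    exact hsort (by omega) hℓ.2 hjn
  have hs := Finset.sum_le_card_nsmul (Icc i j) x (x j) hb
  rw [nsmul_eq_mul] at hs
  rw [div_le_iff₀ hc]
  linarith

lemma left_le_mean (hsort : ∀ ⦃p q : ℕ⦄, 1 ≤ p → p ≤ q → q ≤ n → x p ≤ x q)
    {i j : ℕ} (h1 : 1 ≤ i) (hij : i ≤ j) (hjn : j ≤ n) :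
    x i ≤ (∑ t ∈ Icc i j, x t) / ((Icc i j).card : ℝ) := by
  have hc : (0:ℝ) < ((Icc i j).card : ℝ) := by
    have : (Icc i j).Nonempty := ⟨i, by simp [hij]⟩
    exact_mod_cast Finset.card_pos.2 this
  have hb : ∀ ℓ ∈ Icc i j, x i ≤ x ℓ := by
    intro ℓ hℓ
    rw [Finset.mem_Icc] at hℓ
    exact hsort h1 hℓ.1 (by omega)
  have hs := Finset.card_nsmul_le_sum (Icc i j) x (x i) hb
  rw [nsmul_eq_mul] at hs
  rw [le_div_iff₀ hc]
  linarith

lemma mean_mono_right (hsort : ∀ ⦃p q : ℕ⦄, 1 ≤ p → p ≤ q → q ≤ n → x p ≤ x q)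
    {i j j' : ℕ} (h1 : 1 ≤ i) (hij : i ≤ j) (hjj : j ≤ j') (hjn : j' ≤ n) :
    (∑ t ∈ Icc i j, x t) / ((Icc i j).card : ℝ)
      ≤ (∑ t ∈ Icc i j', x t) / ((Icc i j').card : ℝ) := by
  rcases eq_or_lt_of_le hjj with rfl | h
  · exact le_rfl
  have hm1 : (0:ℝ) < ((Icc i j).card : ℝ) := by
    have : (Icc i j).Nonempty := ⟨i, by simp [hij]⟩
    exact_mod_cast Finset.card_pos.2 this
  have hm2 : (0:ℝ) < ((Icc (j+1) j').card : ℝ) := by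
    have : (Icc (j+1) j').Nonempty := ⟨j+1, by simp; omega⟩
    exact_mod_cast Finset.card_pos.2 this
  have hcn : (Icc i j').card = (Icc i j).card + (Icc (j+1) j').card := by
    simp only [Nat.card_Icc]; omega
  have hcard : ((Icc i j').card : ℝ)
      = ((Icc i j).card : ℝ) + ((Icc (j+1) j').card : ℝ) := by exact_mod_cast hcn
  have hsum : ∑ t ∈ Icc i j', x t
      = (∑ t ∈ Icc i j, x t) + ∑ t ∈ Icc (j+1) j', x t :=
    icc_split (by omega) (by omega) x
  have hA : (∑ t ∈ Icc i j, x t) / ((Icc i j).card : ℝ) ≤ x j :=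
    mean_le_right hsort h1 hij (by omega)
  have hB : x (j+1) ≤ (∑ t ∈ Icc (j+1) j', x t) / ((Icc (j+1) j').card : ℝ) :=
    left_le_mean hsort (by omega) (by omega) hjn
  have hx : x j ≤ x (j+1) := hsort (by omega) (by omega) (by omega)
  set m1 := ((Icc i j).card : ℝ)
  set m2 := ((Icc (j+1) j').card : ℝ)
  set s1 := ∑ t ∈ Icc i j, x t
  set s2 := ∑ t ∈ Icc (j+1) j', x t
  rw [hcard, hsum]
  have hmm : s1 / m1 ≤ s2 / m2 := by linarith
  rw [div_le_div_iff₀ hm1 (by linarith)]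
  rw [div_le_div_iff₀ hm1 hm2] at hmm
  nlinarith

lemma mean_mono_left (hsort : ∀ ⦃p q : ℕ⦄, 1 ≤ p → p ≤ q → q ≤ n → x p ≤ x q)
    {i' i j : ℕ} (h1 : 1 ≤ i') (hii : i' ≤ i) (hij : i ≤ j) (hjn : j ≤ n) :
    (∑ t ∈ Icc i' j, x t) / ((Icc i' j).card : ℝ)
      ≤ (∑ t ∈ Icc i j, x t) / ((Icc i j).card : ℝ) := by
  rcases eq_or_lt_of_le hii with rfl | h
  · exact le_rfl
  have hi1 : i - 1 + 1 = i := by omega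
  have hm1 : (0:ℝ) < ((Icc i' (i-1)).card : ℝ) := by
    have : (Icc i' (i-1)).Nonempty := ⟨i', by simp; omega⟩
    exact_mod_cast Finset.card_pos.2 this
  have hm2 : (0:ℝ) < ((Icc i j).card : ℝ) := by
    have : (Icc i j).Nonempty := ⟨i, by simp [hij]⟩
    exact_mod_cast Finset.card_pos.2 this
  have hcn : (Icc i' j).card = (Icc i' (i-1)).card + (Icc i j).card := by
    simp only [Nat.card_Icc]; omega
  have hcard : ((Icc i' j).card : ℝ)
      = ((Icc i' (i-1)).card : ℝ) + ((Icc i j).card : ℝ) := by exact_mod_cast hcn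
  have hsum : ∑ t ∈ Icc i' j, x t
      = (∑ t ∈ Icc i' (i-1), x t) + ∑ t ∈ Icc i j, x t := by
    have := icc_split (i := i') (k := i-1) (j := j) (by omega) (by omega) x
    rwa [hi1] at this
  have hA : (∑ t ∈ Icc i' (i-1), x t) / ((Icc i' (i-1)).card : ℝ) ≤ x (i-1) :=
    mean_le_right hsort h1 (by omega) (by omega)
  have hB : x i ≤ (∑ t ∈ Icc i j, x t) / ((Icc i j).card : ℝ) :=
    left_le_mean hsort (by omega) hij hjn
  have hx : x (i-1) ≤ x i := hsort (by omega) (by omega) (by omega)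
  set m1 := ((Icc i' (i-1)).card : ℝ)
  set m2 := ((Icc i j).card : ℝ)
  set s1 := ∑ t ∈ Icc i' (i-1), x t
  set s2 := ∑ t ∈ Icc i j, x t
  rw [hcard, hsum]
  have hmm : s1 / m1 ≤ s2 / m2 := by linarith
  rw [div_le_div_iff₀ (by linarith) hm2]
  rw [div_le_div_iff₀ hm1 hm2] at hmm
  nlinarith

end Means

section Chord

variable {f : ℝ → ℝ}

lemma chord (hconv : ConvexOn ℝ Set.univ f) {α β z : ℝ} (hba : β < α)
    (h1 : β ≤ z) (h2 : z ≤ α) :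
    (α - β) * f z ≤ (z - β) * f α + (α - z) * f β := by
  have hne : α - β ≠ 0 := ne_of_gt (by linarith)
  have ht : ((z - β)/(α - β)) * α + ((α - z)/(α - β)) * β = z := by
    field_simp
    ring
  have hone : (z - β)/(α - β) + (α - z)/(α - β) = 1 := by
    field_simp
    ring
  have hj := hconv.2 (Set.mem_univ α) (Set.mem_univ β)
    (div_nonneg (by linarith) (by linarith))
    (div_nonneg (by linarith) (by linarith)) hone
  simp only [smul_eq_mul] at hj
  rw [ht] at hj
  have h3 := mul_le_mul_of_nonneg_left hj (by linarith : (0:ℝ) ≤ α - β)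
  calc (α - β) * f z
      ≤ (α - β) * ((z - β)/(α - β) * f α + (α - z)/(α - β) * f β) := h3
    _ = (z - β) * f α + (α - z) * f β := by field_simp

lemma chord_scaled (hconv : ConvexOn ℝ Set.univ f) {α β m s : ℝ}
    (hm : 0 < m) (hba : β < α) (h1 : β ≤ s/m) (h2 : s/m ≤ α) :
    (α - β) * (m * f (s/m)) ≤ (s - m*β) * f α + (m*α - s) * f β := by
  have hz := chord hconv hba h1 h2
  have e : m * (s/m) = s := by field_simp
  have t := mul_le_mul_of_nonneg_left hz hm.le
  have e1 : m * (s/m) * f α = s * f α := by rw [e]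
  have e2 : m * (s/m) * f β = s * f β := by rw [e]
  nlinarith [t, e1, e2]

end Chord

section CaseOne

set_option maxHeartbeats 1000000 in
lemma case1 (f : ℝ → ℝ) {n : ℕ} {x : ℕ → ℝ}
    (hconv : ConvexOn ℝ Set.univ f)
    (hsort : ∀ ⦃p q : ℕ⦄, 1 ≤ p → p ≤ q → q ≤ n → x p ≤ x q)
    {u v a b : ℕ} (hu : 1 ≤ u) (huv : u < v) (hva : v ≤ a) (hab : a < b)
    (hbn : b ≤ n) :
    bregmanClusterCost f x v b + bregmanClusterCost f x u a
      ≤ bregmanClusterCost f x u b + bregmanClusterCost f x v a := by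
  -- all four intervals nonempty
  have hub : u ≤ b := by omega
  have hvb : v ≤ b := by omega
  have hua : u ≤ a := by omega
  rw [bcc_of_le f x hvb, bcc_of_le f x hua, bcc_of_le f x hub, bcc_of_le f x hva]
  -- cardinalities
  have posc : ∀ i j : ℕ, i ≤ j → (0:ℝ) < ((Icc i j).card : ℝ) := by
    intro i j hij
    have : (Icc i j).Nonempty := ⟨i, by simp [hij]⟩
    exact_mod_cast Finset.card_pos.2 this
  have hmA := posc v b hvb
  have hmB := posc u a hua
  have hmU := posc u b hub
  have hmI := posc v a hva
  -- F identity
  have hFU : ∑ ℓ ∈ Icc u b, f (x ℓ)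
      = (∑ ℓ ∈ Icc u a, f (x ℓ)) + ∑ ℓ ∈ Icc (a+1) b, f (x ℓ) :=
    icc_split (by omega) (by omega) _
  have hFA : ∑ ℓ ∈ Icc v b, f (x ℓ)
      = (∑ ℓ ∈ Icc v a, f (x ℓ)) + ∑ ℓ ∈ Icc (a+1) b, f (x ℓ) :=
    icc_split (by omega) (by omega) _
  -- sum identity
  have hsU : ∑ t ∈ Icc u b, x t
      = (∑ t ∈ Icc u a, x t) + ∑ t ∈ Icc (a+1) b, x t :=
    icc_split (by omega) (by omega) _
  have hsA : ∑ t ∈ Icc v b, x t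
      = (∑ t ∈ Icc v a, x t) + ∑ t ∈ Icc (a+1) b, x t :=
    icc_split (by omega) (by omega) _
  -- card identity
  have hcn : (Icc u b).card + (Icc v a).card = (Icc v b).card + (Icc u a).card := by
    simp only [Nat.card_Icc]; omega
  have hcard : ((Icc u b).card : ℝ) + ((Icc v a).card : ℝ)
      = ((Icc v b).card : ℝ) + ((Icc u a).card : ℝ) := by exact_mod_cast hcn
  -- mean inequalities
  have hβU : (∑ t ∈ Icc u a, x t) / ((Icc u a).card : ℝ)
      ≤ (∑ t ∈ Icc u b, x t) / ((Icc u b).card : ℝ) :=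
    mean_mono_right hsort hu hua (by omega) hbn
  have hUα : (∑ t ∈ Icc u b, x t) / ((Icc u b).card : ℝ)
      ≤ (∑ t ∈ Icc v b, x t) / ((Icc v b).card : ℝ) :=
    mean_mono_left hsort hu (by omega) hvb hbn
  have hβI : (∑ t ∈ Icc u a, x t) / ((Icc u a).card : ℝ)
      ≤ (∑ t ∈ Icc v a, x t) / ((Icc v a).card : ℝ) :=
    mean_mono_left hsort hu (by omega) hva (by omega)
  have hIα : (∑ t ∈ Icc v a, x t) / ((Icc v a).card : ℝ)
      ≤ (∑ t ∈ Icc v b, x t) / ((Icc v b).card : ℝ) :=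
    mean_mono_right hsort (by omega) hva (by omega) hbn
  set mA := ((Icc v b).card : ℝ)
  set mB := ((Icc u a).card : ℝ)
  set mU := ((Icc u b).card : ℝ)
  set mI := ((Icc v a).card : ℝ)
  set sA := ∑ t ∈ Icc v b, x t
  set sB := ∑ t ∈ Icc u a, x t
  set sU := ∑ t ∈ Icc u b, x t
  set sI := ∑ t ∈ Icc v a, x t
  set α := sA / mA with hαdef
  set β := sB / mB with hβdef
  -- moment identity
  have hmom : sU + sI = sA + sB := by
    rw [hsU, hsA]; ring
  -- reduce to the mean inequality
  have main : mU * f (sU/mU) + mI * f (sI/mI) ≤ mA * f α + mB * f β := by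
    have eA : mA * α = sA := by rw [hαdef]; field_simp
    have eB : mB * β = sB := by rw [hβdef]; field_simp
    rcases lt_or_ge β α with hba | hba
    · have c1 := chord_scaled hconv hmU hba hβU hUα
      have c2 := chord_scaled hconv hmI hba hβI hIα
      have key : (α - β) * (mU * f (sU/mU) + mI * f (sI/mI))
          ≤ (α - β) * (mA * f α + mB * f β) := by
        have q1 : (sU + sI) * f α = (mA * α + mB * β) * f α := by
          rw [hmom, eA, eB]
        have q2 : (sU + sI) * f β = (mA * α + mB * β) * f β := by
          rw [hmom, eA, eB]
        have q3 : (mU + mI) * (β * f α) = (mA + mB) * (β * f α) := by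
          rw [hcard]
        have q4 : (mU + mI) * (α * f β) = (mA + mB) * (α * f β) := by
          rw [hcard]
        linarith [c1, c2, q1, q2, q3, q4]
      exact le_of_mul_le_mul_left key (by linarith)
    · -- α = β : all means coincide
      have hba' : α = β := le_antisymm hba (le_trans hβI hIα)
      have hU' : sU / mU = α := le_antisymm hUα (hba' ▸ hβU)
      have hI' : sI / mI = α := le_antisymm hIα (hba' ▸ hβI)
      rw [hU', hI', ← hba']
      have : (mU + mI) * f α = (mA + mB) * f α := by rw [hcard]
      linarith [this]
  linarith [main, hFU, hFA]

end CaseOne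

/-- for a differentiable strictly convex `f : ℝ → ℝ`, sorted reals
`x_1 ≤ … ≤ x_n`, and indices `u < v`, `a < b` (between `1` and `n`), the
concave (Monge) inequality holds for the Bregman cluster cost:
`CC_f(v, b) + CC_f(u, a) ≤ CC_f(u, b) + CC_f(v, a)`. -/
theorem bregmanClusterCost_monge (f : ℝ → ℝ) (hdiff : Differentiable ℝ f)
    (hconv : StrictConvexOn ℝ Set.univ f) (n : ℕ) (x : ℕ → ℝ)
    (hsort : ∀ ⦃p q : ℕ⦄, 1 ≤ p → p ≤ q → q ≤ n → x p ≤ x q)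
    (u v a b : ℕ) (hu : 1 ≤ u) (huv : u < v) (hvn : v ≤ n)
    (ha : 1 ≤ a) (hab : a < b) (hbn : b ≤ n) :
    bregmanClusterCost f x v b + bregmanClusterCost f x u a
      ≤ bregmanClusterCost f x u b + bregmanClusterCost f x v a := by
  have hc := hconv.convexOn
  by_cases hva : v ≤ a
  · exact case1 f hc hsort hu huv hva hab hbn
  · push_neg at hva
    have hIa : bregmanClusterCost f x v a = 0 := bcc_empty f x hva
    by_cases hbv : b < v
    · have hA : bregmanClusterCost f x v b = 0 := bcc_empty f x hbv
      rw [hA, hIa, zero_add, add_zero]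
      by_cases hua : u ≤ a
      · exact bcc_mono_right hc hua hab.le
      · push_neg at hua
        rw [bcc_empty f x hua]
        exact bcc_nonneg hc u b
    · push_neg at hbv
      by_cases hua : u ≤ a
      · have m1 : bregmanClusterCost f x v b ≤ bregmanClusterCost f x (a+1) b :=
          bcc_mono_left hc (by omega) hbv
        have m2 : bregmanClusterCost f x u a + bregmanClusterCost f x (a+1) b
            ≤ bregmanClusterCost f x u b := bcc_superadd hc hua hab
        rw [hIa]
        linarith
      · push_neg at hua
        rw [hIa, bcc_empty f x hua, add_zero, add_zero]
        exact bcc_mono_left hc huv.le hbv
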